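/- Let p be a prime and F a field of characteristic p. Let v ∈ F be an element that is not a p-th power in F, and let B := F[X]/(X^p − v) with t the image of X. If a₁, …, a_{p−1} ∈ F are not all zero, then the element −∑_{j=1}^{p−1} j·a_j^p·t^{p(j−1)+1} of B is not a p-th power in B. -/

import Mathlib

open Polynomial

/-- Lemma 2.4.2 (final assertion, over a field): if `v ∈ F` is not a `p`-th power and
`a₁, …, a_{p−1}` are not all zero, then `−∑_{j=1}^{p−1} j aⱼ^p t^{p(j−1)+1}`
is not a `p`-th power in `B = F[X]/(X^p − v)`. -/
theorem not_pth_power_twisted_sum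
    (p : ℕ) (hp : p.Prime) (F : Type*) [Field F] [CharP F p]
    (v : F) (hv : ¬ ∃ w : F, w ^ p = v)
    (a : ℕ → F) (ha : ∃ j ∈ Finset.Ico 1 p, a j ≠ 0) :
    ¬ ∃ b : AdjoinRoot (X ^ p - C v),
      b ^ p = -∑ j ∈ Finset.Ico 1 p,
        (j : AdjoinRoot (X ^ p - C v)) * AdjoinRoot.of (X ^ p - C v) (a j) ^ p *
          AdjoinRoot.root (X ^ p - C v) ^ (p * (j - 1) + 1) := by
  classical
  haveI : Fact p.Prime := ⟨hp⟩
  set q : F[X] := X ^ p - C v with hq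
  have hv' : ∀ b : F, b ^ p ≠ v := fun b hb => hv ⟨b, hb⟩
  have hirr : Irreducible q := X_pow_sub_C_irreducible_of_prime hp hv'
  haveI : Fact (Irreducible q) := ⟨hirr⟩
  set B := AdjoinRoot q with hB
  haveI : CharP B p := charP_of_injective_algebraMap (algebraMap F B).injective p
  set t : B := AdjoinRoot.root q with htdef
  set ofB : F →+* B := AdjoinRoot.of q with hofB
  have hinj : Function.Injective ofB := ofB.injective
  -- root equation
  have ht : t ^ p = ofB v := by
    have h0 : AdjoinRoot.mk q (X ^ p - C v) = 0 := by rw [← hq]; exact AdjoinRoot.mk_self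
    rw [map_sub, map_pow, AdjoinRoot.mk_X, AdjoinRoot.mk_C, sub_eq_zero] at h0
    exact h0
  -- every p-th power lies in the image of F
  have key : ∀ b : B, ∃ e : F, b ^ p = ofB e := by
    intro b
    obtain ⟨f, rfl⟩ := AdjoinRoot.mk_surjective b
    refine ⟨∑ i ∈ f.support, f.coeff i ^ p * v ^ i, ?_⟩
    have hb : AdjoinRoot.mk q f = ∑ i ∈ f.support, ofB (f.coeff i) * t ^ i := by
      conv_lhs => rw [f.as_sum_support]
      rw [map_sum]
      refine Finset.sum_congr rfl fun i _ => ?_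
      rw [← C_mul_X_pow_eq_monomial, map_mul, map_pow, AdjoinRoot.mk_X, AdjoinRoot.mk_C]
    rw [hb, sum_pow_char, map_sum]
    refine Finset.sum_congr rfl fun i _ => ?_
    rw [mul_pow, ← pow_mul, mul_comm i p, pow_mul, ht, ← map_pow, ← map_pow, ← map_mul]
  -- the coefficient
  set c' : F := ∑ j ∈ Finset.Ico 1 p, (j : F) * a j ^ p * v ^ (j - 1) with hc'def
  have hsum : (∑ j ∈ Finset.Ico 1 p,
      (j : B) * ofB (a j) ^ p * t ^ (p * (j - 1) + 1)) = ofB c' * t := by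
    rw [hc'def, map_sum, Finset.sum_mul]
    refine Finset.sum_congr rfl fun j hj => ?_
    rw [pow_succ, pow_mul, ht, map_mul, map_mul, map_pow, map_pow, map_natCast]
    ring
  -- c' is nonzero
  have hc' : c' ≠ 0 := by
    intro hc0
    set g : F[X] := ∑ j ∈ Finset.Ico 1 p, C ((j : F) * a j) * X ^ (j - 1) with hgdef
    have hgt : (Polynomial.aeval t g) ^ p = ofB c' := by
      rw [hgdef, map_sum, sum_pow_char, hc'def, map_sum]
      refine Finset.sum_congr rfl fun j hj => ?_
      rw [map_mul, map_pow, aeval_C, aeval_X, AdjoinRoot.algebraMap_eq]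
      rw [mul_pow, ← pow_mul, mul_comm (j-1) p, pow_mul, ht, ← map_pow, ← map_pow, ← map_mul]
      congr 1
      have hjp : ((j : F)) ^ p = (j : F) := by
        have := map_natCast (frobenius F p) j
        rwa [frobenius_def] at this
      rw [mul_pow, hjp]
    have hg0 : Polynomial.aeval t g = 0 := by
      have : (Polynomial.aeval t g) ^ p = 0 := by rw [hgt, hc0, map_zero]
      exact pow_eq_zero_iff hp.ne_zero |>.mp this
    have hdvd : q ∣ g := by
      rw [AdjoinRoot.aeval_eq] at hg0
      exact AdjoinRoot.mk_eq_zero.mp hg0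
    obtain ⟨j₀, hj₀, ha₀⟩ := ha
    rw [Finset.mem_Ico] at hj₀
    have hgne : g ≠ 0 := by
      intro hg
      have hco : g.coeff (j₀ - 1) = (j₀ : F) * a j₀ := by
        rw [hgdef, finset_sum_coeff]
        rw [Finset.sum_eq_single j₀]
        · rw [coeff_C_mul, coeff_X_pow, if_pos rfl, mul_one]
        · intro j hj hne
          rw [Finset.mem_Ico] at hj
          rw [coeff_C_mul, coeff_X_pow, if_neg, mul_zero]
          omega
        · intro h; exact absurd (Finset.mem_Ico.mpr hj₀) h
      have hj₀ne : (j₀ : F) ≠ 0 := by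
        rw [Ne, CharP.cast_eq_zero_iff F p]
        intro hdvd'
        have := Nat.le_of_dvd (by omega) hdvd'
        omega
      rw [hg, coeff_zero] at hco
      exact (mul_ne_zero hj₀ne ha₀) hco.symm
    have hdeg : g.natDegree ≤ p - 2 := by
      rw [hgdef]
      refine Polynomial.natDegree_sum_le_of_forall_le _ _ fun j hj => ?_
      rw [Finset.mem_Ico] at hj
      exact le_trans (natDegree_C_mul_X_pow_le _ _) (by omega)
    have hqdeg : q.natDegree = p := by rw [hq, natDegree_X_pow_sub_C]
    have := Polynomial.natDegree_le_of_dvd hdvd hgne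
    rw [hqdeg] at this
    have h2 := hp.two_le
    omega
  -- conclusion
  rintro ⟨b, hb⟩
  obtain ⟨e, he⟩ := key b
  rw [he, hsum] at hb
  have hc'' : ofB (-c') ≠ 0 := by
    rw [Ne, _root_.map_eq_zero]
    exact neg_ne_zero.mpr hc'
  have htF : t = ofB (e / (-c')) := by
    have h1 : ofB (-c') * t = ofB e := by rw [map_neg, neg_mul, hb]
    rw [map_div₀, eq_div_iff hc'', mul_comm]
    exact h1
  have : (e / (-c')) ^ p = v := by
    apply hinj
    rw [map_pow, ← htF, ht]
  exact hv ⟨_, this⟩
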